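/- Let G be a countable commutative group. Then every symmetric multiplicative 2-cocycle f: G × G → ℝ_{>0} is a 2-coboundary: there exists h: G → ℝ_{>0} such that f(g,g') = h(gg')/(h(g)h(g')) for all g, g'. -/

import Mathlib

section Aux

variable {G : Type*} [CommGroup G] (c : G → G → ℝ)

/-- Twisted addition on `G × ℝ` via a 2-cocycle. -/
noncomputable def twistedAdd (p q : G × ℝ) : G × ℝ :=
  (p.1 * q.1, p.2 + q.2 + c p.1 q.1)

noncomputable def twistedAddCommGroup
    (hc : ∀ g g' g'', c g g' + c (g * g') g'' = c g (g' * g'') + c g' g'')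
    (hs : ∀ g g', c g g' = c g' g)
    (h1 : ∀ g, c 1 g = 0) : AddCommGroup (G × ℝ) :=
  letI : Zero (G × ℝ) := ⟨((1 : G), (0 : ℝ))⟩
  letI : Add (G × ℝ) := ⟨twistedAdd c⟩
  letI : Neg (G × ℝ) := ⟨fun p => (p.1⁻¹, -p.2 - c p.1 p.1⁻¹)⟩
  {
  add_assoc := fun a b d => by
    show twistedAdd c (twistedAdd c a b) d = twistedAdd c a (twistedAdd c b d)
    unfold twistedAdd
    ext
    · exact mul_assoc _ _ _
    · show a.2 + b.2 + c a.1 b.1 + d.2 + c (a.1 * b.1) d.1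
        = a.2 + (b.2 + d.2 + c b.1 d.1) + c a.1 (b.1 * d.1)
      have := hc a.1 b.1 d.1
      linarith
  zero_add := fun a => by
    show twistedAdd c ((1 : G), (0 : ℝ)) a = a
    unfold twistedAdd
    simp [h1]
  add_zero := fun a => by
    show twistedAdd c a ((1 : G), (0 : ℝ)) = a
    unfold twistedAdd
    have : c a.1 1 = 0 := by rw [hs]; exact h1 _
    simp [this]
  nsmul := nsmulRec
  zsmul := zsmulRec
  neg_add_cancel := fun a => by
    show twistedAdd c (a.1⁻¹, -a.2 - c a.1 a.1⁻¹) a = ((1 : G), (0 : ℝ))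
    unfold twistedAdd
    ext
    · exact inv_mul_cancel _
    · show -a.2 - c a.1 a.1⁻¹ + a.2 + c a.1⁻¹ a.1 = 0
      have := hs a.1 a.1⁻¹
      linarith
  add_comm := fun a b => by
    show twistedAdd c a b = twistedAdd c b a
    unfold twistedAdd
    ext
    · exact mul_comm _ _
    · show a.2 + b.2 + c a.1 b.1 = b.2 + a.2 + c b.1 a.1
      rw [hs]; ring }

end Aux

/-- Every symmetric multiplicative 2-cocycle on a countable commutative group with values
in the positive reals is a 2-coboundary. -/
theorem symmetric_two_cocycle_is_coboundary
    {G : Type*} [CommGroup G] [Countable G]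
    (f : G → G → ℝ) (hpos : ∀ g g', 0 < f g g')
    (hcocycle : ∀ g g' g'', f g g' * f (g * g') g'' = f g (g' * g'') * f g' g'')
    (hsymm : ∀ g g', f g g' = f g' g)
    (hone : ∀ g, f 1 g = 1 ∧ f g 1 = 1) :
    ∃ h : G → ℝ, (∀ g, 0 < h g) ∧ ∀ g g', f g g' = h (g * g') / (h g * h g') := by
  set c : G → G → ℝ := fun g g' => Real.log (f g g') with hcdef
  have hc : ∀ g g' g'', c g g' + c (g * g') g'' = c g (g' * g'') + c g' g'' := by
    intro g g' g''
    have := hcocycle g g' g''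
    rw [hcdef]
    simp only
    rw [← Real.log_mul (hpos _ _).ne' (hpos _ _).ne',
      ← Real.log_mul (hpos _ _).ne' (hpos _ _).ne', this]
  have hs : ∀ g g', c g g' = c g' g := fun g g' => by rw [hcdef]; simp only [hsymm g g']
  have h1 : ∀ g, c 1 g = 0 := fun g => by rw [hcdef]; simp [(hone g).1]
  letI : AddCommGroup (G × ℝ) := twistedAddCommGroup c hc hs h1
  have hadd : ∀ p q : G × ℝ, p + q = (p.1 * q.1, p.2 + q.2 + c p.1 q.1) := fun p q => rfl
  let i : ULift.{_} ℝ →ₗ[ℤ] (G × ℝ) :=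
    AddMonoidHom.toIntLinearMap
      { toFun := fun a => ((1 : G), a.down)
        map_zero' := rfl
        map_add' := by
          intro a b
          rw [hadd]
          simp [h1] }
  have hinj : Function.Injective i := by
    intro a b hab
    exact ULift.ext a b (congrArg Prod.snd hab)
  have inj : Module.Injective ℤ (ULift.{_} ℝ) :=
    Module.ulift_injective_of_injective ℤ (Module.Baer.of_divisible ℝ).injective
  obtain ⟨r, hr⟩ := inj.out i hinj LinearMap.id
  set s : G → ℝ := fun g => -(r (g, 0)).down with hsdef
  have key : ∀ g g', c g g' = s (g * g') - s g - s g' := by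
    intro g g'
    have h1' : ((g, (0:ℝ)) + (g', (0:ℝ)) : G × ℝ) = (g * g', (0:ℝ)) + i ⟨c g g'⟩ := by
      rw [hadd, hadd]
      have : c (g * g') 1 = 0 := by rw [hs]; exact h1 _
      simp [this, i]
      exact ⟨rfl, by show c g g' = c g g' + c (g * g') 1; rw [this, add_zero]⟩
    have h2 : r (g, 0) + r (g', 0) = r (g * g', 0) + ⟨c g g'⟩ := by
      rw [← map_add, h1', map_add, hr]; rfl
    have hdown : (r (g, 0)).down + (r (g', 0)).down = (r (g * g', 0)).down + c g g' :=
      congrArg ULift.down h2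
    rw [hsdef]
    simp only
    linarith
  refine ⟨fun g => Real.exp (s g), fun g => Real.exp_pos _, fun g g' => ?_⟩
  have hf : f g g' = Real.exp (c g g') := by rw [hcdef]; simp [Real.exp_log (hpos g g')]
  rw [hf, key, Real.exp_sub, Real.exp_sub, div_div]
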